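/- The difference of expected β-Hessians of the noisy- and true-data least squares objectives at the true parameter is the explicit block-diagonal matrix: E[∂²L*_LS/∂β∂βᵀ (γ0)] − E[∂²L_LS/∂β∂βᵀ (γ0)] = blockdiag(0_{p1×p1}, 2λx² tr(S0 d0² S0ᵀ) I_{p2}). -/

import Mathlib

open MeasureTheory ProbabilityTheory Matrix
open scoped Matrix

namespace PSAR

/-- `S(ρ) = I_N − ρ W`. -/
noncomputable def Smat {N : ℕ} (W : Matrix (Fin N) (Fin N) ℝ) (ρ : ℝ) :
    Matrix (Fin N) (Fin N) ℝ :=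
  1 - ρ • W

/-- `Ω(ρ, σ²) = σ² I_N + λ² S(ρ) S(ρ)ᵀ`. -/
noncomputable def Omat {N : ℕ} (W : Matrix (Fin N) (Fin N) ℝ) (lam2 ρ σ2 : ℝ) :
    Matrix (Fin N) (Fin N) ℝ :=
  σ2 • (1 : Matrix (Fin N) (Fin N) ℝ) + lam2 • (Smat W ρ * (Smat W ρ)ᵀ)

/-- `𝕎S(ρ) = W S(ρ)ᵀ + S(ρ) Wᵀ`. -/
noncomputable def WSmat {N : ℕ} (W : Matrix (Fin N) (Fin N) ℝ) (ρ : ℝ) :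
    Matrix (Fin N) (Fin N) ℝ :=
  W * (Smat W ρ)ᵀ + Smat W ρ * Wᵀ

/-- `𝕎(ρ) = Wᵀ S(ρ) + S(ρ)ᵀ W` (least squares version). -/
noncomputable def WLSmat {N : ℕ} (W : Matrix (Fin N) (Fin N) ℝ) (ρ : ℝ) :
    Matrix (Fin N) (Fin N) ℝ :=
  Wᵀ * Smat W ρ + (Smat W ρ)ᵀ * W

/-- The negative log-likelihood
`L(θ) = −log det S(ρ) + (1/2) log det Ω(ρ,σ²) + (1/2)(S(ρ)Ys − Xβ)ᵀ Ω(ρ,σ²)⁻¹ (S(ρ)Ys − Xβ)`. -/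
noncomputable def nll {N p1 p2 : ℕ} (W : Matrix (Fin N) (Fin N) ℝ) (lam2 : ℝ)
    (X : Matrix (Fin N) (Fin p1 ⊕ Fin p2) ℝ) (Ys : Fin N → ℝ)
    (ρ : ℝ) (β : Fin p1 ⊕ Fin p2 → ℝ) (σ2 : ℝ) : ℝ :=
  - Real.log (Smat W ρ).det + (1 / 2) * Real.log (Omat W lam2 ρ σ2).det
    + (1 / 2) * ((Smat W ρ *ᵥ Ys - X *ᵥ β) ⬝ᵥ
        ((Omat W lam2 ρ σ2)⁻¹ *ᵥ (Smat W ρ *ᵥ Ys - X *ᵥ β)))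

/-- Diagonal matrix `d(ρ)` with `d(ρ)_{ii} = 1/(S(ρ)ᵀ S(ρ))_{ii}`. -/
noncomputable def dmat {N : ℕ} (W : Matrix (Fin N) (Fin N) ℝ) (ρ : ℝ) :
    Matrix (Fin N) (Fin N) ℝ :=
  Matrix.diagonal fun i => ((((Smat W ρ)ᵀ * Smat W ρ) i i)⁻¹)

/-- Entrywise first derivative `ḋ(ρ)` of `d(ρ)` in `ρ`. -/
noncomputable def dmatDot {N : ℕ} (W : Matrix (Fin N) (Fin N) ℝ) (ρ : ℝ) :
    Matrix (Fin N) (Fin N) ℝ :=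
  Matrix.diagonal fun i => deriv (fun r => ((((Smat W r)ᵀ * Smat W r) i i)⁻¹)) ρ

/-- Entrywise second derivative `d̈(ρ)` of `d(ρ)` in `ρ`. -/
noncomputable def dmatDDot {N : ℕ} (W : Matrix (Fin N) (Fin N) ℝ) (ρ : ℝ) :
    Matrix (Fin N) (Fin N) ℝ :=
  Matrix.diagonal fun i => deriv (deriv (fun r => ((((Smat W r)ᵀ * Smat W r) i i)⁻¹))) ρ

/-- Least squares objective `L_LS(γ) = ‖d(ρ) S(ρ)ᵀ (S(ρ)Y − Xβ)‖²`. -/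
noncomputable def lsObj {N p1 p2 : ℕ} (W : Matrix (Fin N) (Fin N) ℝ)
    (X : Matrix (Fin N) (Fin p1 ⊕ Fin p2) ℝ) (Y : Fin N → ℝ)
    (ρ : ℝ) (β : Fin p1 ⊕ Fin p2 → ℝ) : ℝ :=
  ((dmat W ρ * (Smat W ρ)ᵀ) *ᵥ (Smat W ρ *ᵥ Y - X *ᵥ β)) ⬝ᵥ
    ((dmat W ρ * (Smat W ρ)ᵀ) *ᵥ (Smat W ρ *ᵥ Y - X *ᵥ β))

/-- Observed response `Y* = S0⁻¹(Xβ0 + E) + ε`. -/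
noncomputable def Yobs {N p1 p2 : ℕ} (W : Matrix (Fin N) (Fin N) ℝ) (ρ0 : ℝ)
    (X : Matrix (Fin N) (Fin p1 ⊕ Fin p2) ℝ) (β0 : Fin p1 ⊕ Fin p2 → ℝ)
    (E ε : Fin N → ℝ) : Fin N → ℝ :=
  (Smat W ρ0)⁻¹ *ᵥ (X *ᵥ β0 + E) + ε

/-- True response `Y = S0⁻¹(Xβ0 + E)`. -/
noncomputable def Ytrue {N p1 p2 : ℕ} (W : Matrix (Fin N) (Fin N) ℝ) (ρ0 : ℝ)
    (X : Matrix (Fin N) (Fin p1 ⊕ Fin p2) ℝ) (β0 : Fin p1 ⊕ Fin p2 → ℝ)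
    (E : Fin N → ℝ) : Fin N → ℝ :=
  (Smat W ρ0)⁻¹ *ᵥ (X *ᵥ β0 + E)

/-- Observed covariates `X* = (X1, X2 + Ex)`. -/
noncomputable def Xobs {N p1 p2 : ℕ} (X : Matrix (Fin N) (Fin p1 ⊕ Fin p2) ℝ)
    (Ex : Fin N → Fin p2 → ℝ) : Matrix (Fin N) (Fin p1 ⊕ Fin p2) ℝ :=
  X + Matrix.of fun i j => Sum.elim (fun _ => (0 : ℝ)) (fun k => Ex i k) j

/-- All the noise entries of `E`, `ε`, `Ex` gathered as a single family. -/
def noiseFam {Ωs : Type*} {N p2 : ℕ} (E ε : Ωs → Fin N → ℝ)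
    (Ex : Ωs → Fin N → Fin p2 → ℝ) :
    (Fin N ⊕ Fin N ⊕ Fin N × Fin p2) → Ωs → ℝ :=
  fun z ω => Sum.elim (fun i => E ω i) (Sum.elim (fun i => ε ω i) (fun q => Ex ω q.1 q.2)) z

private lemma deriv_quad (c0 c1 c2 : ℝ) :
    deriv (fun u : ℝ => c0 + c1 * u + c2 * u ^ 2) 0 = c1 := by
  have h2 : HasDerivAt (fun u : ℝ => u ^ 2) (0 : ℝ) 0 := by
    simpa using hasDerivAt_pow 2 (0 : ℝ)
  have h : HasDerivAt (fun u : ℝ => c0 + c1 * u + c2 * u ^ 2) (0 + c1 * 1 + c2 * 0) 0 :=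
    ((hasDerivAt_const (0:ℝ) c0).add ((hasDerivAt_id' (0:ℝ)).const_mul c1)).add
      (h2.const_mul c2)
  simpa using h.deriv

private lemma hess_dot {n : ℕ} (q a b : Fin n → ℝ) :
    deriv (fun t : ℝ => deriv (fun u : ℝ =>
      (q - t • a - u • b) ⬝ᵥ (q - t • a - u • b)) 0) 0 = 2 * (a ⬝ᵥ b) := by
  have hin : ∀ t : ℝ,
      deriv (fun u : ℝ => (q - t • a - u • b) ⬝ᵥ (q - t • a - u • b)) 0
        = -(2 * ((q - t • a) ⬝ᵥ b)) := by
    intro t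
    have he : (fun u : ℝ => (q - t • a - u • b) ⬝ᵥ (q - t • a - u • b))
        = fun u : ℝ => ((q - t • a) ⬝ᵥ (q - t • a))
            + (-(2 * ((q - t • a) ⬝ᵥ b))) * u + (b ⬝ᵥ b) * u ^ 2 := by
      funext u
      simp only [dotProduct_sub, sub_dotProduct, smul_dotProduct,
        dotProduct_smul, smul_eq_mul, dotProduct_comm b q, dotProduct_comm b a]
      ring
    rw [he, deriv_quad]
  have ho : (fun t : ℝ => deriv (fun u : ℝ =>
        (q - t • a - u • b) ⬝ᵥ (q - t • a - u • b)) 0)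
      = fun t : ℝ => (-(2 * (q ⬝ᵥ b))) + (2 * (a ⬝ᵥ b)) * t + 0 * t ^ 2 := by
    funext t
    rw [hin t]
    simp only [sub_dotProduct, smul_dotProduct, smul_eq_mul]
    ring
  rw [ho, deriv_quad]

private lemma lsObj_hess {N p1 p2 : ℕ} (W : Matrix (Fin N) (Fin N) ℝ) (ρ0 : ℝ)
    (X' : Matrix (Fin N) (Fin p1 ⊕ Fin p2) ℝ) (Y' : Fin N → ℝ)
    (β0 : Fin p1 ⊕ Fin p2 → ℝ) (j k : Fin p1 ⊕ Fin p2) :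
    deriv (fun t : ℝ => deriv (fun u : ℝ =>
        lsObj W X' Y' ρ0 (β0 + t • (Pi.single j 1 : (Fin p1 ⊕ Fin p2) → ℝ)
          + u • (Pi.single k 1 : (Fin p1 ⊕ Fin p2) → ℝ))) 0) 0
      = 2 * ((X'ᵀ * (Smat W ρ0 * (dmat W ρ0 * dmat W ρ0) * (Smat W ρ0)ᵀ) * X') j k) := by
  set M := dmat W ρ0 * (Smat W ρ0)ᵀ with hM
  set q := M *ᵥ (Smat W ρ0 *ᵥ Y' - X' *ᵥ β0) with hq
  set a := M *ᵥ (X' *ᵥ (Pi.single j 1 : (Fin p1 ⊕ Fin p2) → ℝ)) with ha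
  set b := M *ᵥ (X' *ᵥ (Pi.single k 1 : (Fin p1 ⊕ Fin p2) → ℝ)) with hb
  have hfun : ∀ t u : ℝ,
      lsObj W X' Y' ρ0 (β0 + t • (Pi.single j 1 : (Fin p1 ⊕ Fin p2) → ℝ)
          + u • (Pi.single k 1 : (Fin p1 ⊕ Fin p2) → ℝ))
        = (q - t • a - u • b) ⬝ᵥ (q - t • a - u • b) := by
    intro t u
    have hv : Smat W ρ0 *ᵥ Y' - X' *ᵥ (β0 + t • (Pi.single j 1 : (Fin p1 ⊕ Fin p2) → ℝ)
          + u • (Pi.single k 1 : (Fin p1 ⊕ Fin p2) → ℝ))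
        = (Smat W ρ0 *ᵥ Y' - X' *ᵥ β0)
            - t • (X' *ᵥ (Pi.single j 1 : (Fin p1 ⊕ Fin p2) → ℝ))
            - u • (X' *ᵥ (Pi.single k 1 : (Fin p1 ⊕ Fin p2) → ℝ)) := by
      simp only [Matrix.mulVec_add, Matrix.mulVec_smul]
      abel
    unfold lsObj
    rw [← hM, hv, Matrix.mulVec_sub, Matrix.mulVec_sub, Matrix.mulVec_smul, Matrix.mulVec_smul,
      ← hq, ← ha, ← hb]
  have hrw : (fun t : ℝ => deriv (fun u : ℝ =>
        lsObj W X' Y' ρ0 (β0 + t • (Pi.single j 1 : (Fin p1 ⊕ Fin p2) → ℝ)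
          + u • (Pi.single k 1 : (Fin p1 ⊕ Fin p2) → ℝ))) 0)
      = fun t : ℝ => deriv (fun u : ℝ =>
        (q - t • a - u • b) ⬝ᵥ (q - t • a - u • b)) 0 := by
    funext t
    congr 1
    funext u
    exact hfun t u
  rw [hrw, hess_dot]
  congr 1
  have hd : (dmat W ρ0)ᵀ = dmat W ρ0 := by
    unfold dmat; exact Matrix.diagonal_transpose _
  have hG : (M * X')ᵀ * (M * X')
      = X'ᵀ * (Smat W ρ0 * (dmat W ρ0 * dmat W ρ0) * (Smat W ρ0)ᵀ) * X' := by
    rw [hM]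
    simp only [Matrix.transpose_mul, Matrix.transpose_transpose, hd, Matrix.mul_assoc]
  rw [← hG]
  have haj : ∀ i, a i = (M * X') i j := by
    intro i
    simp [ha, Matrix.mulVec, dotProduct, Matrix.mul_apply]
  have hbk : ∀ i, b i = (M * X') i k := by
    intro i
    simp [hb, Matrix.mulVec, dotProduct, Matrix.mul_apply]
  have key : a ⬝ᵥ b = ((M * X')ᵀ * (M * X')) j k := by
    simp only [dotProduct, Matrix.mul_apply, Matrix.transpose_apply]
    refine Finset.sum_congr rfl fun i _ => ?_
    rw [haj i, hbk i, Matrix.mul_apply, Matrix.mul_apply]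
  rw [key]

theorem statement_14
    {Ωs : Type*} [MeasurableSpace Ωs] (μ : Measure Ωs) [IsProbabilityMeasure μ]
    (N p1 p2 : ℕ) (hN : 0 < N) (hp1 : 0 < p1) (hp2 : 0 < p2)
    (W : Matrix (Fin N) (Fin N) ℝ) (hW : ∀ i, W i i = 0)
    (X : Matrix (Fin N) (Fin p1 ⊕ Fin p2) ℝ)
    (ρ0 : ℝ) (β0 : Fin p1 ⊕ Fin p2 → ℝ) (σ02 lam2 lamx2 : ℝ)
    (hσ : 0 < σ02) (hlam : 0 < lam2) (hlamx : 0 < lamx2)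
    (hS0 : 0 < (Smat W ρ0).det)
    (E ε : Ωs → Fin N → ℝ) (Ex : Ωs → Fin N → Fin p2 → ℝ)
    (hindep : iIndepFun (noiseFam E ε Ex) μ)
    (hmom : ∀ z, MemLp (noiseFam E ε Ex z) 4 μ)
    (hmean : ∀ z, ∫ ω, noiseFam E ε Ex z ω ∂μ = 0)
    (hEvar : ∀ i, ∫ ω, (E ω i) ^ 2 ∂μ = σ02)
    (hepsvar : ∀ i, ∫ ω, (ε ω i) ^ 2 ∂μ = lam2)
    (hExvar : ∀ i j, ∫ ω, (Ex ω i j) ^ 2 ∂μ = lamx2) :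
    ∀ j k : Fin p1 ⊕ Fin p2,
      (∫ ω, deriv (fun t : ℝ => deriv (fun u : ℝ =>
            lsObj W (Xobs X (Ex ω)) (Yobs W ρ0 X β0 (E ω) (ε ω)) ρ0
              (β0 + t • (Pi.single j 1 : (Fin p1 ⊕ Fin p2) → ℝ) + u • (Pi.single k 1 : (Fin p1 ⊕ Fin p2) → ℝ))) 0) 0 ∂μ)
        - (∫ ω, deriv (fun t : ℝ => deriv (fun u : ℝ =>
            lsObj W X (Ytrue W ρ0 X β0 (E ω)) ρ0
              (β0 + t • (Pi.single j 1 : (Fin p1 ⊕ Fin p2) → ℝ) + u • (Pi.single k 1 : (Fin p1 ⊕ Fin p2) → ℝ))) 0) 0 ∂μ)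
        = (Matrix.fromBlocks 0 0 0
            ((2 * lamx2 *
              Matrix.trace (Smat W ρ0 * (dmat W ρ0 * dmat W ρ0) * (Smat W ρ0)ᵀ)) •
              (1 : Matrix (Fin p2) (Fin p2) ℝ)) :
            Matrix (Fin p1 ⊕ Fin p2) (Fin p1 ⊕ Fin p2) ℝ) j k
  := by
  classical
  intro j k
  simp only [lsObj_hess]
  set Sm := Smat W ρ0 with hSm
  set dm := dmat W ρ0 with hdm
  set G := Sm * (dm * dm) * Smᵀ with hGdef
  set nf := noiseFam E ε Ex with hnf
  set Zf : Ωs → Fin N → (Fin p1 ⊕ Fin p2) → ℝ :=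
    fun ω r => Sum.elim (fun _ => (0:ℝ)) (fun j2 => Ex ω r j2) with hZf
  have hL2 : ∀ z, MemLp (nf z) 2 μ := fun z =>
    (hmom z).mono_exponent (by norm_num)
  have hInt1 : ∀ z, Integrable (nf z) μ := fun z =>
    (hL2 z).integrable (by norm_num)
  have hIntMul : ∀ z w, Integrable (fun ω => nf z ω * nf w ω) μ := by
    intro z w
    have h : MemLp (nf z • nf w) 1 μ := (hL2 w).smul (hL2 z) (r := 1)
    have he : (fun ω => nf z ω * nf w ω) = nf z • nf w := rfl
    rw [he, ← memLp_one_iff_integrable]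
    exact h
  have hzero : ∀ z w, z ≠ w → ∫ ω, nf z ω * nf w ω ∂μ = 0 := by
    intro z w h
    rw [(hindep.indepFun h).integral_fun_mul_eq_mul_integral (hInt1 z).1 (hInt1 w).1]
    have h1 : ∫ ω, nf z ω ∂μ = 0 := hmean z
    have h2 : ∫ ω, nf w ω ∂μ = 0 := hmean w
    rw [h1, h2, mul_zero]
  have hXo : ∀ (ω : Ωs) r jj, Xobs X (Ex ω) r jj = X r jj + Zf ω r jj := by
    intro ω r jj; cases jj <;> rfl
  have hZint : ∀ r jj, Integrable (fun ω => Zf ω r jj) μ := by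
    intro r jj
    cases jj with
    | inl j1 =>
        have : (fun ω => Zf ω r (Sum.inl j1)) = fun _ => (0:ℝ) := rfl
        rw [this]; exact integrable_const 0
    | inr j2 => exact hInt1 (Sum.inr (Sum.inr (r, j2)))
  have hZmean : ∀ r jj, ∫ ω, Zf ω r jj ∂μ = 0 := by
    intro r jj
    cases jj with
    | inl j1 =>
        have : (fun ω => Zf ω r (Sum.inl j1)) = fun _ => (0:ℝ) := rfl
        rw [this]; simp
    | inr j2 => exact hmean (Sum.inr (Sum.inr (r, j2)))
  have hZmul : ∀ r jj s kk, Integrable (fun ω => Zf ω r jj * Zf ω s kk) μ := by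
    intro r jj s kk
    cases jj with
    | inl j1 =>
        have : (fun ω => Zf ω r (Sum.inl j1) * Zf ω s kk) = fun _ => (0:ℝ) := by
          funext ω; simp [hZf]
        rw [this]; exact integrable_const 0
    | inr j2 =>
        cases kk with
        | inl k1 =>
            have : (fun ω => Zf ω r (Sum.inr j2) * Zf ω s (Sum.inl k1)) = fun _ => (0:ℝ) := by
              funext ω; simp [hZf]
            rw [this]; exact integrable_const 0
        | inr k2 => exact hIntMul (Sum.inr (Sum.inr (r, j2))) (Sum.inr (Sum.inr (s, k2)))
  have hZcov : ∀ r s (j2 k2 : Fin p2),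
      ∫ ω, Zf ω r (Sum.inr j2) * Zf ω s (Sum.inr k2) ∂μ
        = if r = s ∧ j2 = k2 then lamx2 else 0 := by
    intro r s j2 k2
    by_cases h : r = s ∧ j2 = k2
    · obtain ⟨rfl, rfl⟩ := h
      rw [if_pos ⟨rfl, rfl⟩]
      have := hExvar r j2
      simpa [pow_two, hZf] using this
    · rw [if_neg h]
      have hne : (Sum.inr (Sum.inr (r, j2)) : Fin N ⊕ (Fin N ⊕ Fin N × Fin p2))
          ≠ Sum.inr (Sum.inr (s, k2)) := by
        simp only [ne_eq, Sum.inr.injEq, Prod.mk.injEq]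
        exact h
      exact hzero _ _ hne
  -- per-term integrability and value
  have hint_term : ∀ r s, Integrable
      (fun ω => (X r j + Zf ω r j) * (G r s * (X s k + Zf ω s k))) μ := by
    intro r s
    have he : (fun ω => (X r j + Zf ω r j) * (G r s * (X s k + Zf ω s k)))
        = fun ω => G r s * (X r j * X s k) + (G r s * X r j) * Zf ω s k
            + (G r s * X s k) * Zf ω r j + G r s * (Zf ω r j * Zf ω s k) := by
      funext ω; ring
    rw [he]
    exact (((integrable_const _).add ((hZint s k).const_mul _)).add
      ((hZint r j).const_mul _)).add ((hZmul r j s k).const_mul _)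
  have hterm_val : ∀ r s,
      ∫ ω, (X r j + Zf ω r j) * (G r s * (X s k + Zf ω s k)) ∂μ
        = X r j * (G r s * X s k) + G r s * (∫ ω, Zf ω r j * Zf ω s k ∂μ) := by
    intro r s
    have he : (fun ω => (X r j + Zf ω r j) * (G r s * (X s k + Zf ω s k)))
        = fun ω => G r s * (X r j * X s k) + (G r s * X r j) * Zf ω s k
            + (G r s * X s k) * Zf ω r j + G r s * (Zf ω r j * Zf ω s k) := by
      funext ω; ring
    have i1 : Integrable (fun _ : Ωs => G r s * (X r j * X s k)) μ := integrable_const _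
    have i2 : Integrable (fun ω => (G r s * X r j) * Zf ω s k) μ := (hZint s k).const_mul _
    have i3 : Integrable (fun ω => (G r s * X s k) * Zf ω r j) μ := (hZint r j).const_mul _
    have i4 : Integrable (fun ω => G r s * (Zf ω r j * Zf ω s k)) μ :=
      (hZmul r j s k).const_mul _
    have i12 : Integrable (fun ω => G r s * (X r j * X s k)
        + (G r s * X r j) * Zf ω s k) μ := i1.add i2
    have i123 : Integrable (fun ω => G r s * (X r j * X s k)
        + (G r s * X r j) * Zf ω s k + (G r s * X s k) * Zf ω r j) μ := i12.add i3
    rw [he, integral_add i123 i4, integral_add i12 i3,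
      integral_add i1 i2, integral_const,
      integral_const_mul (G r s * X r j) (fun ω => Zf ω s k),
      integral_const_mul (G r s * X s k) (fun ω => Zf ω r j),
      integral_const_mul (G r s) (fun ω => Zf ω r j * Zf ω s k),
      hZmean, hZmean]
    simp only [measure_univ, ENNReal.toReal_one, probReal_univ, one_smul, mul_zero, add_zero]
    ring
  -- rewrite noisy integrand as double sum
  have hnoise_fun : ∀ ω : Ωs, (2 : ℝ) * (((Xobs X (Ex ω))ᵀ * G * (Xobs X (Ex ω))) j k)
      = 2 * ∑ r, ∑ s, (X r j + Zf ω r j) * (G r s * (X s k + Zf ω s k)) := by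
    intro ω
    congr 1
    rw [Matrix.mul_assoc, Matrix.mul_apply]
    refine Finset.sum_congr rfl fun r _ => ?_
    rw [Matrix.transpose_apply, Matrix.mul_apply, Finset.mul_sum]
    refine Finset.sum_congr rfl fun s _ => ?_
    rw [hXo, hXo]
  have hswap : ∫ ω, (2:ℝ) * (((Xobs X (Ex ω))ᵀ * G * (Xobs X (Ex ω))) j k) ∂μ
      = 2 * ∑ r, ∑ s, ∫ ω, (X r j + Zf ω r j) * (G r s * (X s k + Zf ω s k)) ∂μ := by
    simp_rw [hnoise_fun]
    rw [integral_const_mul]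
    congr 1
    rw [integral_finset_sum _ fun r _ => integrable_finset_sum _ fun s _ => hint_term r s]
    exact Finset.sum_congr rfl fun r _ => integral_finset_sum _ fun s _ => hint_term r s
  have hXGX : (Xᵀ * G * X) j k = ∑ r, ∑ s, X r j * (G r s * X s k) := by
    rw [Matrix.mul_assoc, Matrix.mul_apply]
    refine Finset.sum_congr rfl fun r _ => ?_
    rw [Matrix.transpose_apply, Matrix.mul_apply, Finset.mul_sum]
  have htrue : ∫ (ω : Ωs), (2:ℝ) * ((Xᵀ * G * X) j k) ∂μ = 2 * ((Xᵀ * G * X) j k) := by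
    simp
  rw [hswap, htrue]
  have hsum : ∑ r, ∑ s, ∫ ω, (X r j + Zf ω r j) * (G r s * (X s k + Zf ω s k)) ∂μ
      = (∑ r, ∑ s, X r j * (G r s * X s k))
        + ∑ r, ∑ s, G r s * (∫ ω, Zf ω r j * Zf ω s k ∂μ) := by
    simp_rw [hterm_val]
    rw [← Finset.sum_add_distrib]
    exact Finset.sum_congr rfl fun r _ => Finset.sum_add_distrib
  rw [hsum, ← hXGX, mul_add, add_sub_cancel_left]
  -- now compute the extra term by cases
  cases j with
  | inl j1 =>
      have hV : ∀ r s, ∫ ω, Zf ω r (Sum.inl j1) * Zf ω s k ∂μ = 0 := by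
        intro r s
        have : (fun ω => Zf ω r (Sum.inl j1) * Zf ω s k) = fun _ => (0:ℝ) := by
          funext ω; simp [hZf]
        rw [this]; simp
      cases k <;> simp [hV]
  | inr j2 =>
      cases k with
      | inl k1 =>
          have hV : ∀ r s, ∫ ω, Zf ω r (Sum.inr j2) * Zf ω s (Sum.inl k1) ∂μ = 0 := by
            intro r s
            have : (fun ω => Zf ω r (Sum.inr j2) * Zf ω s (Sum.inl k1)) = fun _ => (0:ℝ) := by
              funext ω; simp [hZf]
            rw [this]; simp
          simp [hV]
      | inr k2 =>
          simp only [hZcov]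
          by_cases hjk : j2 = k2
          · subst hjk
            have hrow : ∀ r, ∑ s, G r s * (if r = s ∧ j2 = j2 then lamx2 else 0)
                = G r r * lamx2 := by
              intro r
              simp [mul_ite, mul_zero, Finset.sum_ite_eq]
            rw [Finset.sum_congr rfl fun r _ => hrow r]
            simp only [Matrix.fromBlocks_apply₂₂, Matrix.smul_apply, Matrix.one_apply_eq,
              smul_eq_mul, mul_one, Matrix.trace, Matrix.diag, Finset.mul_sum]
            exact Finset.sum_congr rfl fun i _ => by ring
          · have hz : ∀ r s : Fin N, (if r = s ∧ j2 = k2 then lamx2 else (0:ℝ)) = 0 := by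
              intro r s; simp [hjk]
            simp [hz, Matrix.one_apply, hjk]


end PSAR
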